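/- arXiv:0908.3577 — 6 statements merged into one kernel-verified Lean document; each statement's English description precedes it below -/
import Mathlib

section
/- If A is an approximately weakly amenable Banach algebra, then A is essential, i.e., the closed linear span of products A² is dense in A. -/
open ContinuousLinearMap Filter Topology

open ContinuousLinearMap Filter Topology

/-- A Banach `A`-bimodule: a complete normed `ℂ`-space with commuting continuous
left and right `A`-actions, jointly bounded and bilinear. -/
structure BBimod (A : Type) [NonUnitalNormedRing A] [NormedSpace ℂ A] where
  carrier : Type
  [grp : NormedAddCommGroup carrier]
  [mod : NormedSpace ℂ carrier]
  [complete : CompleteSpace carrier]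
  lsmul : A → carrier →L[ℂ] carrier
  rsmul : A → carrier →L[ℂ] carrier
  lsmul_add : ∀ a b, lsmul (a + b) = lsmul a + lsmul b
  rsmul_add : ∀ a b, rsmul (a + b) = rsmul a + rsmul b
  lsmul_smul : ∀ (c : ℂ) (a), lsmul (c • a) = c • lsmul a
  rsmul_smul : ∀ (c : ℂ) (a), rsmul (c • a) = c • rsmul a
  lsmul_mul : ∀ a b, lsmul (a * b) = (lsmul a).comp (lsmul b)
  rsmul_mul : ∀ a b, rsmul (a * b) = (rsmul b).comp (rsmul a)
  lsmul_rsmul : ∀ a b, (lsmul a).comp (rsmul b) = (rsmul b).comp (lsmul a)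
  bound : ∃ C : ℝ, ∀ a, ‖lsmul a‖ ≤ C * ‖a‖ ∧ ‖rsmul a‖ ≤ C * ‖a‖

attribute [instance] BBimod.grp BBimod.mod BBimod.complete

variable {A : Type} [NonUnitalNormedRing A] [NormedSpace ℂ A]

/-- The dual of a Banach bimodule, with the canonical dual actions
`⟨u, Λ·a⟩ = ⟨a·u, Λ⟩` and `⟨u, a·Λ⟩ = ⟨u·a, Λ⟩`. -/
noncomputable def BBimod.dual (M : BBimod A) : BBimod A where
  carrier := M.carrier →L[ℂ] ℂ
  lsmul a := (compL ℂ M.carrier M.carrier ℂ).flip (M.rsmul a)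
  rsmul a := (compL ℂ M.carrier M.carrier ℂ).flip (M.lsmul a)
  lsmul_add a b := by ext Λ x; simp [M.rsmul_add]
  rsmul_add a b := by ext Λ x; simp [M.lsmul_add]
  lsmul_smul c a := by ext Λ x; simp [M.rsmul_smul]
  rsmul_smul c a := by ext Λ x; simp [M.lsmul_smul]
  lsmul_mul a b := by ext Λ x; simp [M.rsmul_mul]
  rsmul_mul a b := by ext Λ x; simp [M.lsmul_mul]
  lsmul_rsmul a b := by
    ext Λ x
    have h : M.lsmul b (M.rsmul a x) = M.rsmul a (M.lsmul b x) := by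
      have := congrArg (fun T : M.carrier →L[ℂ] M.carrier => T x) (M.lsmul_rsmul b a)
      simpa using this
    simp [h]
  bound := by
    obtain ⟨C, hC⟩ := M.bound
    refine ⟨C, fun a => ⟨?_, ?_⟩⟩
    · refine opNorm_le_bound _ ?_ fun Λ => ?_
      · exact le_trans (norm_nonneg _) (hC a).2
      · calc ‖Λ.comp (M.rsmul a)‖ ≤ ‖Λ‖ * ‖M.rsmul a‖ := opNorm_comp_le _ _
          _ ≤ (C * ‖a‖) * ‖Λ‖ := by
              rw [mul_comm]
              exact mul_le_mul_of_nonneg_right (hC a).2 (norm_nonneg _)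
    · refine opNorm_le_bound _ ?_ fun Λ => ?_
      · exact le_trans (norm_nonneg _) (hC a).1
      · calc ‖Λ.comp (M.lsmul a)‖ ≤ ‖Λ‖ * ‖M.lsmul a‖ := opNorm_comp_le _ _
          _ ≤ (C * ‖a‖) * ‖Λ‖ := by
              rw [mul_comm]
              exact mul_le_mul_of_nonneg_right (hC a).1 (norm_nonneg _)

variable (A) [IsScalarTower ℂ A A] [SMulCommClass ℂ A A] [CompleteSpace A]

/-- `A` as a Banach bimodule over itself. -/
noncomputable def BBimod.base : BBimod A where
  carrier := A
  lsmul a := ContinuousLinearMap.mul ℂ A a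
  rsmul a := (ContinuousLinearMap.mul ℂ A).flip a
  lsmul_add a b := by ext x; simp [add_mul]
  rsmul_add a b := by ext x; simp [mul_add]
  lsmul_smul c a := by ext x; simp [smul_mul_assoc]
  rsmul_smul c a := by ext x; simp [mul_smul_comm]
  lsmul_mul a b := by ext x; simp [mul_assoc]
  rsmul_mul a b := by ext x; simp [mul_assoc]
  lsmul_rsmul a b := by ext x; simp [mul_assoc]
  bound := by
    refine ⟨1, fun a => ⟨?_, ?_⟩⟩
    · simpa using ContinuousLinearMap.opNorm_mul_apply_le ℂ A a
    · refine le_trans (opNorm_le_bound _ (norm_nonneg a) fun x => ?_) (by simp)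
      simpa [mul_comm] using norm_mul_le x a


/-- The `n`-th dual `A^(n)` of `A` as a Banach `A`-bimodule. -/
noncomputable def iterDual : ℕ → BBimod A
  | 0 => BBimod.base A
  | n + 1 => (iterDual n).dual

variable {A}

/-- `D` is a derivation from `A` into the Banach bimodule `M`. -/
def IsDerivation (M : BBimod A) (D : A →L[ℂ] M.carrier) : Prop :=
  ∀ a b : A, D (a * b) = M.lsmul a (D b) + M.rsmul b (D a)

/-- `D` is an inner derivation. -/
def IsInner (M : BBimod A) (D : A →L[ℂ] M.carrier) : Prop :=
  ∃ x : M.carrier, ∀ a : A, D a = M.lsmul a x - M.rsmul a x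

/-- `D` is approximately inner: there is a net `(x_i)` in `M` with
`D a = lim_i (a·x_i − x_i·a)` for every `a`. -/
def IsApproxInner (M : BBimod A) (D : A →L[ℂ] M.carrier) : Prop :=
  ∃ (ι : Type) (l : Filter ι) (x : ι → M.carrier), l.NeBot ∧
    ∀ a : A, Tendsto (fun i => M.lsmul a (x i) - M.rsmul a (x i)) l (𝓝 (D a))

variable (A)

/-- `A` is weakly amenable. -/
def WeaklyAmenable : Prop :=
  ∀ D : A →L[ℂ] (iterDual A 1).carrier, IsDerivation (iterDual A 1) D → IsInner (iterDual A 1) D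

/-- `A` is approximately `n`-weakly amenable. -/
def ApproxNWeaklyAmenable (n : ℕ) : Prop :=
  ∀ D : A →L[ℂ] (iterDual A n).carrier,
    IsDerivation (iterDual A n) D → IsApproxInner (iterDual A n) D

/-- `A` is `n`-weakly amenable. -/
def NWeaklyAmenable (n : ℕ) : Prop :=
  ∀ D : A →L[ℂ] (iterDual A n).carrier,
    IsDerivation (iterDual A n) D → IsInner (iterDual A n) D

/-- `A` is approximately weakly amenable. -/
def ApproxWeaklyAmenable : Prop := ApproxNWeaklyAmenable A 1

/-- `A` is approximately amenable: every continuous derivation into the dual of a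
Banach `A`-bimodule is approximately inner. -/
def ApproxAmenable : Prop :=
  ∀ (X : BBimod A) (D : A →L[ℂ] X.dual.carrier), IsDerivation X.dual D → IsApproxInner X.dual D
variable (A : Type) [NonUnitalNormedRing A] [NormedSpace ℂ A]
  [IsScalarTower ℂ A A] [SMulCommClass ℂ A A] [CompleteSpace A]


lemma exists_functional_vanishing {A : Type} [NormedAddCommGroup A] [NormedSpace ℂ A]
    (p : Submodule ℂ A) (h : p.topologicalClosure ≠ ⊤) :
    ∃ Λ : A →L[ℂ] ℂ, Λ ≠ 0 ∧ ∀ x ∈ p, Λ x = 0 := by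
  set S := p.topologicalClosure with hS
  haveI : IsClosed (S : Set A) := p.isClosed_topologicalClosure
  obtain ⟨x, hx⟩ : ∃ x : A, x ∉ S := by
    by_contra hc
    push_neg at hc
    exact h (Submodule.eq_top_iff'.2 hc)
  have hx0 : (Submodule.Quotient.mk x : A ⧸ S) ≠ 0 := by
    simpa [Submodule.Quotient.mk_eq_zero] using hx
  obtain ⟨g, hg1, hgx⟩ := exists_dual_vector ℂ (Submodule.Quotient.mk x : A ⧸ S) (norm_ne_zero_iff.2 hx0)
  let q : A →L[ℂ] (A ⧸ S) :=
    LinearMap.mkContinuous S.mkQ 1 (fun m => by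
      simpa using Submodule.Quotient.norm_mk_le S m)
  refine ⟨g.comp q, ?_, ?_⟩
  · intro hzero
    have : g (Submodule.Quotient.mk x : A ⧸ S) = 0 := by
      have := congrArg (fun f : A →L[ℂ] ℂ => f x) hzero
      simpa [q] using this
    rw [hgx] at this
    exact hx0 (norm_eq_zero.1 (Complex.ofReal_eq_zero.1 this))
  · intro y hy
    have hyS : y ∈ S := p.le_topologicalClosure hy
    have : (Submodule.Quotient.mk y : A ⧸ S) = 0 := (Submodule.Quotient.mk_eq_zero S).2 hyS
    simp [q, ContinuousLinearMap.comp_apply, LinearMap.mkContinuous_apply]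
    show g (S.mkQ y) = 0
    simp [Submodule.mkQ_apply, this]

/-- If `A` is approximately weakly amenable then `A` is essential:
the closed linear span of products is all of `A`. -/
theorem essential_of_approxWeaklyAmenable (h : ApproxWeaklyAmenable A) :
    (Submodule.span ℂ {x : A | ∃ a b : A, a * b = x}).topologicalClosure = ⊤ := by
  by_contra hne
  obtain ⟨Λ, hΛne, hΛ0⟩ := exists_functional_vanishing _ hne
  have hprod : ∀ a b : A, Λ (a * b) = 0 := fun a b =>
    hΛ0 _ (Submodule.subset_span ⟨a, b, rfl⟩)
  let D : A →L[ℂ] (iterDual A 1).carrier := Λ.smulRight Λ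
  have hD : IsDerivation (iterDual A 1) D := by
    intro a b
    apply ContinuousLinearMap.ext
    intro u
    simp [D, iterDual, BBimod.dual, BBimod.base, hprod]
    revert u
    change ∀ u : A, Λ (a * b) * Λ u = Λ b * Λ (u * a) + Λ a * Λ (b * u)
    intro u
    simp [hprod]
  obtain ⟨ι, l, x, hne', htend⟩ := h D hD
  obtain ⟨u, hu⟩ : ∃ u : A, Λ u ≠ 0 := by
    by_contra hc; push_neg at hc
    exact hΛne (ContinuousLinearMap.ext fun u => by simp [hc u])
  let ev : (iterDual A 1).carrier →L[ℂ] ℂ := ContinuousLinearMap.apply ℂ ℂ u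
  have heval : Tendsto
      (fun i => ev ((iterDual A 1).lsmul u (x i) - (iterDual A 1).rsmul u (x i)))
      l (𝓝 (ev (D u))) :=
    (ev.continuous.tendsto _).comp (htend u)
  have hzero : (fun i => ev ((iterDual A 1).lsmul u (x i) - (iterDual A 1).rsmul u (x i)))
      = fun _ => (0 : ℂ) := by
    funext i
    have y : A →L[ℂ] ℂ := x i
    show (show A →L[ℂ] ℂ from x i) (u * u) - (show A →L[ℂ] ℂ from x i) (u * u) = 0
    simp
  rw [hzero] at heval
  have h2 : ev (D u) = 0 := tendsto_nhds_unique heval tendsto_const_nhds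
  rw [show ev (D u) = Λ u • Λ u from rfl, smul_eq_mul] at h2
  exact mul_self_ne_zero.2 hu h2
end

section
/- If A is a commutative approximately weakly amenable Banach algebra, θ : A → B is a continuous algebra homomorphism into a Banach algebra B with dense range, then B is approximately weakly amenable. -/
open ContinuousLinearMap Filter Topology

open ContinuousLinearMap Filter Topology

variable {A : Type} [NonUnitalNormedRing A] [NormedSpace ℂ A]

variable (A) [IsScalarTower ℂ A A] [SMulCommClass ℂ A A] [CompleteSpace A]

variable {A}

variable (A)

variable (A : Type) [NonUnitalNormedRing A] [NormedSpace ℂ A]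
  [IsScalarTower ℂ A A] [SMulCommClass ℂ A A] [CompleteSpace A]

/-- If `A` is commutative and approximately weakly amenable and `θ : A → B` is a
continuous homomorphism with dense range, then `B` is approximately weakly amenable. -/
theorem approxWeaklyAmenable_of_denseRange_hom
    (hcomm : ∀ a b : A, a * b = b * a) (h : ApproxWeaklyAmenable A)
    {B : Type} [NonUnitalNormedRing B] [NormedSpace ℂ B]
    [IsScalarTower ℂ B B] [SMulCommClass ℂ B B] [CompleteSpace B]
    (θ : A →L[ℂ] B) (hθ_mul : ∀ a b : A, θ (a * b) = θ a * θ b)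
    (hθ_dense : DenseRange θ) :
    ApproxWeaklyAmenable B := by
  haveI hT2A : T2Space (iterDual A 1).carrier := inferInstanceAs (T2Space (A →L[ℂ] ℂ))
  haveI hT2B : T2Space (iterDual B 1).carrier := inferInstanceAs (T2Space (B →L[ℂ] ℂ))
  intro D hD
  -- Pull back D along θ to a derivation D' : A → A*.
  let D' : A →L[ℂ] (iterDual A 1).carrier :=
    ((compL ℂ A B ℂ).flip θ).comp (D.comp θ)
  have hD' : IsDerivation (iterDual A 1) D' := by
    intro a b
    show (show A →L[ℂ] ℂ from D' (a * b))
        = (show A →L[ℂ] ℂ from (iterDual A 1).lsmul a (D' b))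
          + (show A →L[ℂ] ℂ from (iterDual A 1).rsmul b (D' a))
    refine ContinuousLinearMap.ext fun c => ?_
    show (show B →L[ℂ] ℂ from D (θ (a * b))) (θ c)
        = (show B →L[ℂ] ℂ from D (θ b)) (θ (c * a))
          + (show B →L[ℂ] ℂ from D (θ a)) (θ (b * c))
    have key : (show B →L[ℂ] ℂ from D (θ a * θ b)) (θ c)
        = (show B →L[ℂ] ℂ from D (θ b)) (θ c * θ a)
          + (show B →L[ℂ] ℂ from D (θ a)) (θ b * θ c) :=
      congrArg (fun Λ : (iterDual B 1).carrier =>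
        (show B →L[ℂ] ℂ from Λ) (θ c)) (hD (θ a) (θ b))
    rw [hθ_mul a b, hθ_mul c a, hθ_mul b c, key]
  obtain ⟨ι, l, x, hl, hx⟩ := h D' hD'
  -- In the commutative case all inner commutators on A* vanish, so D' = 0.
  have hzero : ∀ a : A, D' a = 0 := by
    intro a
    have hconst : ∀ i, (iterDual A 1).lsmul a (x i) - (iterDual A 1).rsmul a (x i) = 0 := by
      intro i
      show (show A →L[ℂ] ℂ from (iterDual A 1).lsmul a (x i))
          - (show A →L[ℂ] ℂ from (iterDual A 1).rsmul a (x i)) = 0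
      refine ContinuousLinearMap.ext fun c => ?_
      show (show A →L[ℂ] ℂ from x i) (c * a) - (show A →L[ℂ] ℂ from x i) (a * c) = (0 : ℂ)
      rw [hcomm a c, sub_self]
    have := hx a
    simp only [hconst] at this
    exact (tendsto_nhds_unique tendsto_const_nhds this).symm
  -- Hence D vanishes on the dense range of θ, so D = 0.
  have hDθ : ∀ a : A, D (θ a) = 0 := by
    intro a
    show (show B →L[ℂ] ℂ from D (θ a)) = 0
    refine ContinuousLinearMap.ext fun b => ?_
    refine DenseRange.induction_on hθ_dense b ?_ ?_
    · exact isClosed_eq (show B →L[ℂ] ℂ from D (θ a)).continuous continuous_const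
    · intro c
      exact congrArg (fun Λ : (iterDual A 1).carrier =>
        (show A →L[ℂ] ℂ from Λ) c) (hzero a)
  have hDzero : ∀ b : B, D b = 0 := by
    intro b
    refine DenseRange.induction_on hθ_dense b ?_ ?_
    · exact isClosed_eq D.continuous continuous_const
    · intro a; exact hDθ a
  -- A zero derivation is approximately inner.
  refine ⟨Unit, pure (), fun _ => 0, pure_neBot, fun b => ?_⟩
  have hc : (fun _ : Unit => (iterDual B 1).lsmul b (0 : (iterDual B 1).carrier)
      - (iterDual B 1).rsmul b 0) = fun _ => 0 := by
    funext i; simp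
  rw [hc, hDzero b]
  exact tendsto_const_nhds
end

section
/- Let I be a closed ideal of a Banach algebra A. If the quotient A/I is approximately weakly amenable, then I has the approximate trace extension property. -/
open ContinuousLinearMap Filter Topology

open ContinuousLinearMap Filter Topology

variable {A : Type} [NonUnitalNormedRing A] [NormedSpace ℂ A]

variable (A) [IsScalarTower ℂ A A] [SMulCommClass ℂ A A] [CompleteSpace A]

variable {A}

variable (A)

section Concrete
variable (A : Type) [NonUnitalNormedRing A] [NormedSpace ℂ A]
  [IsScalarTower ℂ A A] [SMulCommClass ℂ A A]

/-- The left action of `A` on its dual `A*`: `(a·f)(b) = f (b * a)`. -/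
noncomputable def lact (a : A) (f : A →L[ℂ] ℂ) : A →L[ℂ] ℂ :=
  f.comp ((ContinuousLinearMap.mul ℂ A).flip a)

/-- The right action of `A` on its dual `A*`: `(f·a)(b) = f (a * b)`. -/
noncomputable def ract (a : A) (f : A →L[ℂ] ℂ) : A →L[ℂ] ℂ :=
  f.comp (ContinuousLinearMap.mul ℂ A a)

variable [CompleteSpace A]

/-- `A` is approximately cyclic amenable: every continuous cyclic derivation
`D : A → A*` is approximately inner. -/
def ApproxCyclicAmenable : Prop :=
  ∀ D : A →L[ℂ] (A →L[ℂ] ℂ),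
    (∀ a b : A, D (a * b) = lact A a (D b) + ract A b (D a)) →
    (∀ a b : A, D a b + D b a = 0) →
    ∃ (ι : Type) (l : Filter ι) (x : ι → (A →L[ℂ] ℂ)), l.NeBot ∧
      ∀ a : A, Tendsto (fun i => lact A a (x i) - ract A a (x i)) l (𝓝 (D a))

/-- `A` has a bounded (two-sided) approximate identity. -/
def HasBAI : Prop :=
  ∃ (ι : Type) (l : Filter ι) (e : ι → A) (C : ℝ), l.NeBot ∧ (∀ i, ‖e i‖ ≤ C) ∧
    ∀ a : A, Tendsto (fun i => e i * a) l (𝓝 a) ∧ Tendsto (fun i => a * e i) l (𝓝 a)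

end Concrete

section TEP
variable (A : Type) [NonUnitalNormedRing A] [NormedSpace ℂ A]
  [IsScalarTower ℂ A A] [SMulCommClass ℂ A A] [CompleteSpace A]

/-- The closed ideal `I` has the approximate trace extension property: every
`A`-central functional `λ ∈ I*` extends to a net `(Λ_α) ⊆ A*` with `Λ_α|_I = λ`
and `a·Λ_α − Λ_α·a → 0` for each `a ∈ A`. -/
def ApproxTraceExt (I : Submodule ℂ A)
    (hl : ∀ (a x : A), x ∈ I → a * x ∈ I) (hr : ∀ (a x : A), x ∈ I → x * a ∈ I) : Prop :=
  ∀ lam : ↥I →L[ℂ] ℂ,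
    (∀ (a : A) (x : ↥I), lam ⟨(x : A) * a, hr a x x.2⟩ = lam ⟨a * (x : A), hl a x x.2⟩) →
    ∃ (ι : Type) (l : Filter ι) (L : ι → (A →L[ℂ] ℂ)), l.NeBot ∧
      (∀ (i : ι) (x : ↥I), L i (x : A) = lam x) ∧
      (∀ a : A, Tendsto (fun i => lact A a (L i) - ract A a (L i)) l (𝓝 0))

end TEP
variable (A : Type) [NonUnitalNormedRing A] [NormedSpace ℂ A]
  [IsScalarTower ℂ A A] [SMulCommClass ℂ A A] [CompleteSpace A]

section MyAux

variable {E : Type} [NonUnitalNormedRing E] [NormedSpace ℂ E]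
  [IsScalarTower ℂ E E] [SMulCommClass ℂ E E] [CompleteSpace E]
  {F : Type} [NonUnitalNormedRing F] [NormedSpace ℂ F]
  [IsScalarTower ℂ F F] [SMulCommClass ℂ F F] [CompleteSpace F]

/-- Key estimate from the quotient-norm hypothesis. -/
lemma myaux_le_mul_norm (π : E →L[ℂ] F) (hπ_surj : Function.Surjective π)
    (hπ_norm : ∀ q : F, ‖q‖ = sInf {r : ℝ | ∃ a : E, π a = q ∧ ‖a‖ = r})
    (q : F) (C r : ℝ) (hC : 0 ≤ C) (hr : 0 ≤ r)
    (h : ∀ a : E, π a = q → r ≤ C * ‖a‖) : r ≤ C * ‖q‖ := by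
  rcases hC.eq_or_lt with hC0 | hC0
  · obtain ⟨a, ha⟩ := hπ_surj q
    have h1 := h a ha
    rw [← hC0, zero_mul] at h1 ⊢
    exact h1
  · rw [hπ_norm q, ← div_le_iff₀' hC0]
    apply le_csInf
    · obtain ⟨a, ha⟩ := hπ_surj q; exact ⟨‖a‖, a, ha, rfl⟩
    · rintro s ⟨a, ha, rfl⟩
      exact (div_le_iff₀' hC0).mpr (h a ha)

/-- Dual norms only shrink when passing to the quotient. -/
lemma myaux_norm_le (π : E →L[ℂ] F) (hπ_surj : Function.Surjective π)
    (hπ_norm : ∀ q : F, ‖q‖ = sInf {r : ℝ | ∃ a : E, π a = q ∧ ‖a‖ = r})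
    (g : F →L[ℂ] ℂ) : ‖g‖ ≤ ‖g.comp π‖ := by
  refine opNorm_le_bound _ (norm_nonneg _) fun q => ?_
  refine myaux_le_mul_norm π hπ_surj hπ_norm q _ _ (norm_nonneg _) (norm_nonneg _) ?_
  intro a ha
  rw [← ha]
  exact (g.comp π).le_opNorm a

/-- Lifting a functional vanishing on the kernel through the quotient map. -/
lemma myaux_lift (π : E →L[ℂ] F) (hπ_surj : Function.Surjective π)
    (hπ_norm : ∀ q : F, ‖q‖ = sInf {r : ℝ | ∃ a : E, π a = q ∧ ‖a‖ = r})
    (f : E →L[ℂ] ℂ) (hf : ∀ a : E, π a = 0 → f a = 0) :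
    ∃ g : F →L[ℂ] ℂ, g.comp π = f := by
  have key : ∀ a a' : E, π a = π a' → f a = f a' := by
    intro a a' h
    have h0 : π (a - a') = 0 := by rw [map_sub, h, sub_self]
    have h1 := hf (a - a') h0
    rw [map_sub, sub_eq_zero] at h1
    exact h1
  classical
  choose sec hsec using hπ_surj
  have hπ_surj' : Function.Surjective π := fun q => ⟨sec q, hsec q⟩
  have hg0 : ∀ a : E, f (sec (π a)) = f a := fun a => key _ _ (hsec (π a))
  let g₀ : F →ₗ[ℂ] ℂ :=
    { toFun := fun q => f (sec q)
      map_add' := by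
        intro q r
        have h1 : π (sec q + sec r) = q + r := by rw [map_add, hsec, hsec]
        have h2 : f (sec (q + r)) = f (sec q + sec r) := by
          apply key; rw [hsec, h1]
        simp only [h2, map_add]
      map_smul' := by
        intro c q
        have h1 : π (c • sec q) = c • q := by rw [map_smul, hsec]
        have h2 : f (sec (c • q)) = f (c • sec q) := by
          apply key; rw [hsec, h1]
        simp only [h2, map_smul, RingHom.id_apply] }
  have hbound : ∀ q : F, ‖g₀ q‖ ≤ ‖f‖ * ‖q‖ := by
    intro q
    refine myaux_le_mul_norm π hπ_surj' hπ_norm q _ _ (norm_nonneg _) (norm_nonneg _) ?_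
    intro a ha
    have : g₀ q = f a := by
      show f (sec q) = f a
      apply key; rw [hsec, ha]
    rw [this]
    exact f.le_opNorm a
  refine ⟨LinearMap.mkContinuous g₀ ‖f‖ hbound, ?_⟩
  ext a
  show f (sec (π a)) = f a
  exact hg0 a

end MyAux

/-- If the quotient `A/I` of `A` by a closed ideal `I` is approximately weakly
amenable, then `I` has the approximate trace extension property.  The quotient is
represented by a Banach algebra `Q` together with a surjective contractive quotient
homomorphism `π : A → Q` with kernel `I` inducing the quotient norm. -/
theorem approxTraceExt_of_quotient_approxWeaklyAmenable
    (I : Submodule ℂ A) (hclosed : IsClosed (I : Set A))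
    (hl : ∀ (a x : A), x ∈ I → a * x ∈ I) (hr : ∀ (a x : A), x ∈ I → x * a ∈ I)
    {Q : Type} [NonUnitalNormedRing Q] [NormedSpace ℂ Q]
    [IsScalarTower ℂ Q Q] [SMulCommClass ℂ Q Q] [CompleteSpace Q]
    (π : A →L[ℂ] Q)
    (hπ_mul : ∀ a b : A, π (a * b) = π a * π b)
    (hπ_surj : Function.Surjective π)
    (hπ_ker : ∀ a : A, π a = 0 ↔ a ∈ I)
    (hπ_norm : ∀ q : Q, ‖q‖ = sInf {r : ℝ | ∃ a : A, π a = q ∧ ‖a‖ = r})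
    (hQ : ApproxWeaklyAmenable Q) :
    ApproxTraceExt A I hl hr := by
  classical
  intro lam htr
  -- Hahn–Banach extension of `lam` to all of `A`
  obtain ⟨Λ₀, hΛ₀, -⟩ := exists_extension_norm_eq I lam
  -- the inner "derivation" on `A`
  set d : A → (A →L[ℂ] ℂ) := fun a => lact A a Λ₀ - ract A a Λ₀ with hd_def
  have hd_apply : ∀ a b : A, d a b = Λ₀ (b * a) - Λ₀ (a * b) := by
    intro a b
    simp [hd_def, lact, ract]
  -- `d a` vanishes on `I`
  have hdI : ∀ (a x : A) (hx : x ∈ I), d a x = 0 := by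
    intro a x hx
    rw [hd_apply]
    have h1 : Λ₀ (x * a) = lam ⟨x * a, hr a x hx⟩ := hΛ₀ ⟨x * a, hr a x hx⟩
    have h2 : Λ₀ (a * x) = lam ⟨a * x, hl a x hx⟩ := hΛ₀ ⟨a * x, hl a x hx⟩
    rw [h1, h2, htr a ⟨x, hx⟩, sub_self]
  -- `d` vanishes on `I`
  have hd0 : ∀ a : A, a ∈ I → d a = 0 := by
    intro a ha
    ext b
    rw [hd_apply]
    have h1 : Λ₀ (b * a) = lam ⟨b * a, hl b a ha⟩ := hΛ₀ ⟨b * a, hl b a ha⟩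
    have h2 : Λ₀ (a * b) = lam ⟨a * b, hr b a ha⟩ := hΛ₀ ⟨a * b, hr b a ha⟩
    have h3 := htr b ⟨a, ha⟩
    simp only [ContinuousLinearMap.zero_apply]
    rw [h1, h2, h3, sub_self]
  -- linearity properties of d
  have hd_add : ∀ a a' : A, d (a + a') = d a + d a' := by
    intro a a'
    ext b
    simp only [ContinuousLinearMap.add_apply, hd_apply, mul_add, add_mul, map_add]
    ring
  have hd_smul : ∀ (c : ℂ) (a : A), d (c • a) = c • d a := by
    intro c a
    ext b
    simp only [ContinuousLinearMap.smul_apply, hd_apply, mul_smul_comm, smul_mul_assoc,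
      map_smul, smul_eq_mul]
    ring
  have hd_eq : ∀ a a' : A, π a = π a' → d a = d a' := by
    intro a a' h
    have hz : π (a - a') = 0 := by rw [map_sub, h, sub_self]
    have hmem : a - a' ∈ I := (hπ_ker _).mp hz
    have h0 := hd0 _ hmem
    ext b
    have := congrArg (fun f : A →L[ℂ] ℂ => f b) h0
    simp only [ContinuousLinearMap.zero_apply] at this
    have heq : d (a - a') b = d a b - d a' b := by
      simp only [hd_apply, mul_sub, sub_mul, map_sub]; ring
    rw [heq] at this
    exact sub_eq_zero.mp this
  -- norm bound for d
  have hd_norm : ∀ a : A, ‖d a‖ ≤ 2 * ‖Λ₀‖ * ‖a‖ := by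
    intro a
    refine opNorm_le_bound _ (by positivity) fun b => ?_
    rw [hd_apply]
    calc ‖Λ₀ (b * a) - Λ₀ (a * b)‖ ≤ ‖Λ₀ (b * a)‖ + ‖Λ₀ (a * b)‖ := norm_sub_le _ _
      _ ≤ ‖Λ₀‖ * ‖b * a‖ + ‖Λ₀‖ * ‖a * b‖ := add_le_add (Λ₀.le_opNorm _) (Λ₀.le_opNorm _)
      _ ≤ ‖Λ₀‖ * (‖b‖ * ‖a‖) + ‖Λ₀‖ * (‖a‖ * ‖b‖) := by
          gcongr <;> [exact norm_mul_le _ _; exact norm_mul_le _ _]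
      _ = 2 * ‖Λ₀‖ * ‖a‖ * ‖b‖ := by ring
  -- section of π
  choose sec hsec using hπ_surj
  have hπ_surj' : Function.Surjective π := fun q => ⟨sec q, hsec q⟩
  -- lift d through π for each q
  have hlift : ∀ q : Q, ∃ g : Q →L[ℂ] ℂ, g.comp π = d (sec q) := by
    intro q
    refine myaux_lift π hπ_surj' hπ_norm (d (sec q)) ?_
    intro a ha
    exact hdI _ a ((hπ_ker a).mp ha)
  choose Dfun hDfun using hlift
  -- uniqueness of lifts
  have huniq : ∀ g g' : Q →L[ℂ] ℂ, g.comp π = g'.comp π → g = g' := by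
    intro g g' h
    ext q
    obtain ⟨a, rfl⟩ := hπ_surj' q
    exact DFunLike.congr_fun h a
  have hDπ : ∀ a : A, (Dfun (π a)).comp π = d a := by
    intro a
    rw [hDfun (π a)]
    exact hd_eq _ _ (hsec (π a))
  have hDab : ∀ a b : A, Dfun (π a) (π b) = d a b := fun a b => DFunLike.congr_fun (hDπ a) b
  -- the lifted map is linear
  have hD_add : ∀ q r : Q, Dfun (q + r) = Dfun q + Dfun r := by
    intro q r
    apply huniq
    ext a
    obtain ⟨b, rfl⟩ := hπ_surj' q
    obtain ⟨c, rfl⟩ := hπ_surj' r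
    have h1 : π b + π c = π (b + c) := (map_add π b c).symm
    simp only [ContinuousLinearMap.comp_apply, ContinuousLinearMap.add_apply, h1]
    rw [hDab, hDab, hDab, hd_add]
    simp
  have hD_smul : ∀ (c : ℂ) (q : Q), Dfun (c • q) = c • Dfun q := by
    intro c q
    apply huniq
    ext a
    obtain ⟨b, rfl⟩ := hπ_surj' q
    have h1 : c • π b = π (c • b) := (map_smul π c b).symm
    simp only [ContinuousLinearMap.comp_apply, ContinuousLinearMap.smul_apply, h1]
    rw [hDab, hDab, hd_smul]
    simp
  -- norm bound for the lifted map
  have hD_norm : ∀ q : Q, ‖Dfun q‖ ≤ 2 * ‖Λ₀‖ * ‖q‖ := by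
    intro q
    refine myaux_le_mul_norm π hπ_surj' hπ_norm q _ _ (by positivity) (norm_nonneg _) ?_
    intro a ha
    have h1 : (Dfun q).comp π = d a := by
      rw [hDfun q]
      exact hd_eq _ _ (by rw [hsec, ha])
    calc ‖Dfun q‖ ≤ ‖(Dfun q).comp π‖ := myaux_norm_le π hπ_surj' hπ_norm _
      _ = ‖d a‖ := by rw [h1]
      _ ≤ 2 * ‖Λ₀‖ * ‖a‖ := hd_norm a
  -- package D as a continuous linear map into the dual bimodule
  let Dlin : Q →ₗ[ℂ] (Q →L[ℂ] ℂ) :=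
    { toFun := Dfun
      map_add' := hD_add
      map_smul' := hD_smul }
  let D : Q →L[ℂ] (iterDual Q 1).carrier := LinearMap.mkContinuous Dlin (2 * ‖Λ₀‖) hD_norm
  have hD_apply : ∀ q : Q, D q = Dfun q := fun q => rfl
  -- definitional identification of the dual bimodule carrier
  let c1 : (iterDual Q 1).carrier → (Q →L[ℂ] ℂ) := fun z => z
  have hD_apply' : ∀ q : Q, c1 (D q) = Dfun q := fun q => rfl
  -- D is a derivation
  have hder : IsDerivation (iterDual Q 1) D := by
    intro q r
    obtain ⟨a, rfl⟩ := hπ_surj' q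
    obtain ⟨b, rfl⟩ := hπ_surj' r
    apply huniq (c1 (D (π a * π b)))
      (c1 ((iterDual Q 1).lsmul (π a) (D (π b)) + (iterDual Q 1).rsmul (π b) (D (π a))))
    ext c
    show c1 (D (π a * π b)) (π c)
      = c1 (D (π b)) (π c * π a) + c1 (D (π a)) (π b * π c)
    rw [← hπ_mul a b, ← hπ_mul c a, ← hπ_mul b c]
    rw [hD_apply', hD_apply', hD_apply', hDab, hDab, hDab]
    simp only [hd_apply, mul_assoc]
    ring
  -- approximate innerness of D
  obtain ⟨ι, l, x, hne, htend⟩ := hQ D hder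
  -- precomposition with π as a continuous linear map between duals
  let T : (Q →L[ℂ] ℂ) →L[ℂ] (A →L[ℂ] ℂ) := (compL ℂ A Q ℂ).flip π
  have hT : ∀ g : Q →L[ℂ] ℂ, T g = g.comp π := fun g => rfl
  refine ⟨ι, l, fun i => Λ₀ - (c1 (x i)).comp π, hne, ?_, ?_⟩
  · intro i z
    have hz : π (z : A) = 0 := (hπ_ker _).mpr z.2
    simp only [ContinuousLinearMap.sub_apply, ContinuousLinearMap.comp_apply]
    rw [hz, map_zero, sub_zero]
    exact hΛ₀ z
  · intro a
    have key : ∀ i, lact A a (Λ₀ - (c1 (x i)).comp π) - ract A a (Λ₀ - (c1 (x i)).comp π)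
        = d a - T (c1 ((iterDual Q 1).lsmul (π a) (x i) - (iterDual Q 1).rsmul (π a) (x i))) := by
      intro i
      ext b
      have e3 : T (c1 ((iterDual Q 1).lsmul (π a) (x i) - (iterDual Q 1).rsmul (π a) (x i))) b
          = c1 (x i) (π b * π a) - c1 (x i) (π a * π b) := rfl
      simp only [ContinuousLinearMap.sub_apply, lact, ract, ContinuousLinearMap.comp_apply,
        hd_apply, e3]
      have e1 : ((ContinuousLinearMap.mul ℂ A).flip a) b = b * a := rfl
      have e2 : (ContinuousLinearMap.mul ℂ A a) b = a * b := rfl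
      rw [e1, e2, ← hπ_mul b a, ← hπ_mul a b]
      ring
    have hlim : Tendsto (fun i => d a
        - T (c1 ((iterDual Q 1).lsmul (π a) (x i) - (iterDual Q 1).rsmul (π a) (x i)))) l
        (𝓝 (d a - T (c1 (D (π a))))) := by
      exact Tendsto.const_sub _ ((T.continuous.tendsto _).comp (htend (π a)))
    have hfinal : d a - T (c1 (D (π a))) = 0 := by
      rw [hT, hD_apply', hDfun, hd_eq _ _ (hsec (π a)), sub_self]
    simp only [key]
    rw [← hfinal]
    exact hlim
end

section
/- Let I be a closed ideal of a Banach algebra A. If A is weakly amenable and I has the approximate trace extension property, then A/I is approximately weakly amenable. -/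
open ContinuousLinearMap Filter Topology

open ContinuousLinearMap Filter Topology

variable {A : Type} [NonUnitalNormedRing A] [NormedSpace ℂ A]

variable (A) [IsScalarTower ℂ A A] [SMulCommClass ℂ A A] [CompleteSpace A]

variable {A}

variable (A)

variable (A : Type) [NonUnitalNormedRing A] [NormedSpace ℂ A]
  [IsScalarTower ℂ A A] [SMulCommClass ℂ A A] [CompleteSpace A]

/-- If `A` is weakly amenable and the closed ideal `I` has the approximate trace
extension property, then `A/I` is approximately weakly amenable.  The quotient is
represented by a Banach algebra `Q` together with a surjective quotient
homomorphism `π : A → Q` with kernel `I` inducing the quotient norm. -/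
theorem quotient_approxWeaklyAmenable_of_weaklyAmenable_of_approxTraceExt
    (I : Submodule ℂ A) (hclosed : IsClosed (I : Set A))
    (hl : ∀ (a x : A), x ∈ I → a * x ∈ I) (hr : ∀ (a x : A), x ∈ I → x * a ∈ I)
    {Q : Type} [NonUnitalNormedRing Q] [NormedSpace ℂ Q]
    [IsScalarTower ℂ Q Q] [SMulCommClass ℂ Q Q] [CompleteSpace Q]
    (π : A →L[ℂ] Q)
    (hπ_mul : ∀ a b : A, π (a * b) = π a * π b)
    (hπ_surj : Function.Surjective π)
    (hπ_ker : ∀ a : A, π a = 0 ↔ a ∈ I)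
    (hπ_norm : ∀ q : Q, ‖q‖ = sInf {r : ℝ | ∃ a : A, π a = q ∧ ‖a‖ = r})
    (hA : WeaklyAmenable A) (hTEP : ApproxTraceExt A I hl hr) :
    ApproxWeaklyAmenable Q := by
  intro D hD
  -- coerce D to a concrete CLM
  let Dc : Q →L[ℂ] (Q →L[ℂ] ℂ) := show _ from D
  -- the pulled-back derivation on A
  let Dt : A →L[ℂ] (A →L[ℂ] ℂ) :=
    (((compL ℂ A Q ℂ).flip π).comp Dc).comp π
  have hDt_app : ∀ a b : A, Dt a b = Dc (π a) (π b) := fun a b => rfl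
  have hDc : ∀ a : A, Dc (π a) = (show Q →L[ℂ] ℂ from D (π a)) := fun a => rfl
  -- pointwise derivation identity for D
  have hD_app : ∀ p q : Q, Dc (p * q) = lact Q p (Dc q) + ract Q q (Dc p) := by
    intro p q
    exact hD p q
  have hDt_der : ∀ a b : A, Dt (a * b) = lact A a (Dt b) + ract A b (Dt a) := by
    intro a b
    ext x
    have h := congrArg (fun Λ : Q →L[ℂ] ℂ => Λ (π x)) (hD_app (π a) (π b))
    simp only [ContinuousLinearMap.add_apply] at h
    show Dc (π (a * b)) (π x) = Dc (π b) (π (x * a)) + Dc (π a) (π (b * x))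
    rw [hπ_mul a b, hπ_mul x a, hπ_mul b x]
    simpa [lact, ract] using h
  have hDt' : IsDerivation (iterDual A 1)
      (show A →L[ℂ] (iterDual A 1).carrier from Dt) := fun a b => hDt_der a b
  obtain ⟨f0, hf0⟩ := hA _ hDt'
  set f : A →L[ℂ] ℂ := show A →L[ℂ] ℂ from f0 with hfdef
  have hf : ∀ a b : A, Dt a b = f (b * a) - f (a * b) := by
    intro a b
    have h := congrArg (fun Λ : (iterDual A 1).carrier =>
      (show A →L[ℂ] ℂ from Λ) b) (hf0 a)
    exact h
  -- centrality of f restricted to I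
  have hcent : ∀ (a : A) (x : ↥I),
      (f.comp I.subtypeL) ⟨(x : A) * a, hr a x x.2⟩ =
      (f.comp I.subtypeL) ⟨a * (x : A), hl a x x.2⟩ := by
    intro a x
    have h0 : π (x : A) = 0 := (hπ_ker _).mpr x.2
    have h1 : Dt a (x : A) = 0 := by
      rw [hDt_app, h0]; simp
    have h2 := hf a (x : A)
    rw [h1] at h2
    have h3 : f ((x : A) * a) = f (a * (x : A)) := sub_eq_zero.mp h2.symm
    simpa using h3
  obtain ⟨ι, l, L, hne, hres, htend⟩ := hTEP (f.comp I.subtypeL) hcent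
  -- quotient norm bound
  have hbound : ∀ (φ : Q → ℂ) (C : ℝ), 0 ≤ C → (∀ a : A, ‖φ (π a)‖ ≤ C * ‖a‖) →
      ∀ q : Q, ‖φ q‖ ≤ C * ‖q‖ := by
    intro φ C hC hφ q
    obtain ⟨a0, ha0⟩ := hπ_surj q
    have hSne : Set.Nonempty {r : ℝ | ∃ a : A, π a = q ∧ ‖a‖ = r} := ⟨‖a0‖, a0, ha0, rfl⟩
    have hmem : ∀ r ∈ {r : ℝ | ∃ a : A, π a = q ∧ ‖a‖ = r}, ‖φ q‖ ≤ C * r := by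
      rintro r ⟨a, rfl, rfl⟩; exact hφ a
    rw [hπ_norm q]
    rcases eq_or_lt_of_le hC with h0 | hpos
    · have h1 := hmem ‖a0‖ ⟨a0, ha0, rfl⟩
      rw [← h0] at h1 ⊢
      simpa using h1
    · have h1 : ‖φ q‖ / C ≤ sInf {r : ℝ | ∃ a : A, π a = q ∧ ‖a‖ = r} := by
        refine le_csInf hSne fun r hr => ?_
        rw [div_le_iff₀ hpos, mul_comm]
        exact hmem r hr
      calc ‖φ q‖ = C * (‖φ q‖ / C) := by field_simp
        _ ≤ C * sInf {r : ℝ | ∃ a : A, π a = q ∧ ‖a‖ = r} :=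
            mul_le_mul_of_nonneg_left h1 hC
  -- lifting functionals vanishing on I
  have hlift : ∀ g : A →L[ℂ] ℂ, (∀ x ∈ I, g x = 0) →
      ∃ h : Q →L[ℂ] ℂ, ∀ a : A, h (π a) = g a := by
    intro g hg
    have hker : ∀ a b : A, π a = π b → g a = g b := by
      intro a b hab
      have hmem : a - b ∈ I := (hπ_ker _).1 (by rw [map_sub, hab, sub_self])
      have h := hg _ hmem
      rw [map_sub, sub_eq_zero] at h; exact h
    have hs : ∀ q : Q, π (Function.surjInv hπ_surj q) = q :=
      fun q => Function.surjInv_eq hπ_surj q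
    set s := Function.surjInv hπ_surj with hsdef
    let h0 : Q →ₗ[ℂ] ℂ :=
      { toFun := fun q => g (s q)
        map_add' := fun p q => by
          show g (s (p + q)) = g (s p) + g (s q)
          rw [hker (s (p + q)) (s p + s q) (by rw [map_add, hs, hs, hs]), map_add]
        map_smul' := fun c q => by
          show g (s (c • q)) = (RingHom.id ℂ) c • g (s q)
          rw [hker (s (c • q)) (c • s q) (by rw [map_smul, hs, hs]), map_smul]; rfl }
    have hcomp : ∀ a : A, h0 (π a) = g a := fun a => hker _ _ (hs _)
    have hbd : ∀ q, ‖h0 q‖ ≤ ‖g‖ * ‖q‖ := by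
      refine hbound (fun q => h0 q) ‖g‖ (norm_nonneg g) fun a => ?_
      simpa [hcomp a] using g.le_opNorm a
    exact ⟨h0.mkContinuous ‖g‖ hbd, fun a => hcomp a⟩
  -- the differences f - L i vanish on I
  have hLlam : ∀ (i : ι) (x : A) (hx : x ∈ I), L i x = f x := by
    intro i x hx
    simpa using hres i ⟨x, hx⟩
  have hgI : ∀ i : ι, ∀ x ∈ I, (f - L i) x = 0 := by
    intro i x hx
    simp [ContinuousLinearMap.sub_apply, hLlam i x hx]
  choose h hh using fun i => hlift (f - L i) (hgI i)
  refine ⟨ι, l, fun i => (show (iterDual Q 1).carrier from h i), hne, ?_⟩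
  intro q
  obtain ⟨a, rfl⟩ := hπ_surj q
  set G : ι → (A →L[ℂ] ℂ) := fun i => lact A a (L i) - ract A a (L i) with hG
  have hGnorm : Tendsto (fun i => ‖G i‖) l (𝓝 0) := by
    have h1 := htend a
    have h2 := (continuous_norm.tendsto (0 : A →L[ℂ] ℂ)).comp h1
    rw [norm_zero] at h2; exact h2
  have hFapp : ∀ (i : ι) (b : A),
      ((lact Q (π a) (h i) - ract Q (π a) (h i)) - (show Q →L[ℂ] ℂ from D (π a))) (π b)
        = -(G i b) := by
    intro i b
    have h1 : (h i) (π b * π a) = f (b * a) - L i (b * a) := by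
      rw [← hπ_mul]; exact hh i (b * a)
    have h2 : (h i) (π a * π b) = f (a * b) - L i (a * b) := by
      rw [← hπ_mul]; exact hh i (a * b)
    have h3 : (show Q →L[ℂ] ℂ from D (π a)) (π b) = f (b * a) - f (a * b) := by
      rw [← hDc, ← hDt_app]; exact hf a b
    show (h i) (π b * π a) - (h i) (π a * π b) - (show Q →L[ℂ] ℂ from D (π a)) (π b) = -(G i b)
    simp only [hG, ContinuousLinearMap.sub_apply, lact, ract,
      ContinuousLinearMap.comp_apply, ContinuousLinearMap.flip_apply,
      ContinuousLinearMap.mul_apply', h1, h2, h3]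
    ring
  have hFnorm : ∀ i : ι,
      ‖(lact Q (π a) (h i) - ract Q (π a) (h i)) - (show Q →L[ℂ] ℂ from D (π a))‖ ≤ ‖G i‖ := by
    intro i
    refine opNorm_le_bound _ (norm_nonneg _) (hbound _ ‖G i‖ (norm_nonneg _) fun b => ?_)
    rw [hFapp i b, norm_neg]
    exact (G i).le_opNorm b
  have hF0 : Tendsto (fun i => (lact Q (π a) (h i) - ract Q (π a) (h i))) l
      (𝓝 (show Q →L[ℂ] ℂ from D (π a))) := by
    rw [tendsto_iff_norm_sub_tendsto_zero]
    exact squeeze_zero (fun i => norm_nonneg _) hFnorm hGnorm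
  exact hF0
end

section
/- Let I be a closed ideal of a Banach algebra A. If I is weakly amenable and A/I is approximately weakly amenable, then A is approximately weakly amenable. -/
open ContinuousLinearMap Filter Topology

open ContinuousLinearMap Filter Topology

noncomputable instance NonUnitalSubalgebra.normedSpaceComplex {A : Type} [NonUnitalNormedRing A]
    [NormedSpace ℂ A] (I : NonUnitalSubalgebra ℂ A) : NormedSpace ℂ I :=
  SubmoduleClass.toNormedSpace I

variable {A : Type} [NonUnitalNormedRing A] [NormedSpace ℂ A]

variable (A) [IsScalarTower ℂ A A] [SMulCommClass ℂ A A] [CompleteSpace A]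

variable {A}

variable (A)

section AuxHelpers

variable {B : Type} [NonUnitalNormedRing B] [NormedSpace ℂ B]
  [IsScalarTower ℂ B B] [SMulCommClass ℂ B B] [CompleteSpace B]

/-- The left action of `B` on its dual, as an explicit map. -/
noncomputable def dls (a : B) (Λ : B →L[ℂ] ℂ) : B →L[ℂ] ℂ := (iterDual B 1).lsmul a Λ

/-- The right action of `B` on its dual, as an explicit map. -/
noncomputable def drs (a : B) (Λ : B →L[ℂ] ℂ) : B →L[ℂ] ℂ := (iterDual B 1).rsmul a Λ

@[simp] lemma dls_apply (a : B) (Λ : B →L[ℂ] ℂ) (x : B) : dls a Λ x = Λ (x * a) := rfl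

@[simp] lemma drs_apply (a : B) (Λ : B →L[ℂ] ℂ) (x : B) : drs a Λ x = Λ (a * x) := rfl

@[simp] lemma dls_zero (a : B) : dls a (0 : B →L[ℂ] ℂ) = 0 := by
  ext x; simp

@[simp] lemma drs_zero (a : B) : drs a (0 : B →L[ℂ] ℂ) = 0 := by
  ext x; simp

/-- An inner-derivation-type map `a ↦ (x ↦ F (x * a) - F (a * x))`. -/
noncomputable def adF (F : B →L[ℂ] ℂ) : B →L[ℂ] (B →L[ℂ] ℂ) :=
  ((ContinuousLinearMap.compL ℂ B B ℂ) F).comp (ContinuousLinearMap.mul ℂ B).flip -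
  ((ContinuousLinearMap.compL ℂ B B ℂ) F).comp (ContinuousLinearMap.mul ℂ B)

@[simp] lemma adF_apply (F : B →L[ℂ] ℂ) (a x : B) : adF F a x = F (x * a) - F (a * x) := rfl

lemma adF_isDerivation (F : B →L[ℂ] ℂ) : IsDerivation (iterDual B 1) (adF F) := by
  intro a b
  show adF F (a * b) = dls a (adF F b) + drs b (adF F a)
  ext c
  simp only [adF_apply, dls_apply, drs_apply, ContinuousLinearMap.add_apply, mul_assoc]
  ring

lemma isDerivation_sub {M : BBimod B} {D D' : B →L[ℂ] M.carrier}
    (h : IsDerivation M D) (h' : IsDerivation M D') : IsDerivation M (D - D') := by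
  intro a b
  simp only [ContinuousLinearMap.sub_apply, h a b, h' a b, map_sub]
  abel

lemma weaklyAmenable_essential (h : WeaklyAmenable B) :
    (Submodule.span ℂ {z : B | ∃ x y : B, z = x * y}).topologicalClosure = ⊤ := by
  set J := (Submodule.span ℂ {z : B | ∃ x y : B, z = x * y}).topologicalClosure with hJ
  by_contra hne
  obtain ⟨x₀, hx₀⟩ : ∃ x : B, x ∉ J := by
    by_contra hall
    push_neg at hall
    exact hne (Submodule.eq_top_iff'.2 hall)
  haveI : IsClosed (J : Set B) := Submodule.isClosed_topologicalClosure _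
  let mkc : B →L[ℂ] (B ⧸ J) :=
    J.mkQ.mkContinuous 1 (fun x => by simpa using Submodule.Quotient.norm_mk_le J x)
  have hmk0 : mkc x₀ ≠ 0 := by
    simpa [mkc, Submodule.Quotient.mk_eq_zero] using hx₀
  obtain ⟨g, -, hg2⟩ := exists_dual_vector ℂ (mkc x₀) (norm_ne_zero_iff.mpr hmk0)
  set lam : B →L[ℂ] ℂ := g.comp mkc with hlam
  have hlamx₀ : lam x₀ ≠ 0 := by
    rw [hlam]
    simp only [ContinuousLinearMap.comp_apply, hg2]
    simpa using hmk0
  have hlam0 : ∀ x y : B, lam (x * y) = 0 := by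
    intro x y
    have hmem : x * y ∈ J :=
      Submodule.le_topologicalClosure _ (Submodule.subset_span ⟨x, y, rfl⟩)
    have h0 : mkc (x * y) = 0 := (Submodule.Quotient.mk_eq_zero J).2 hmem
    simp [hlam, h0]
  let D₀ : B →L[ℂ] (B →L[ℂ] ℂ) := lam.smulRight lam
  have hD₀ : IsDerivation (iterDual B 1) D₀ := by
    intro a b
    show D₀ (a * b) = dls a (D₀ b) + drs b (D₀ a)
    ext u
    simp only [ContinuousLinearMap.add_apply, dls_apply, drs_apply,
      ContinuousLinearMap.smulRight_apply, ContinuousLinearMap.smul_apply, D₀,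
      hlam0 a b, hlam0 u a, hlam0 b u, smul_eq_mul, zero_smul, zero_mul,
      ContinuousLinearMap.zero_apply]
    ring
  obtain ⟨μ₀, hμ₀⟩ := h D₀ hD₀
  have hμ : D₀ x₀ = dls x₀ μ₀ - drs x₀ μ₀ := hμ₀ x₀
  have := DFunLike.congr_fun hμ x₀
  simp only [ContinuousLinearMap.sub_apply, dls_apply, drs_apply,
    ContinuousLinearMap.smulRight_apply, ContinuousLinearMap.smul_apply, smul_eq_mul, sub_self,
    D₀] at this
  exact hlamx₀ (mul_self_eq_zero.mp (this.trans (sub_self _)))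

end AuxHelpers

section LiftHelper

variable {A Q E : Type} [NonUnitalNormedRing A] [NormedSpace ℂ A]
  [NonUnitalNormedRing Q] [NormedSpace ℂ Q]
  [NormedAddCommGroup E] [NormedSpace ℂ E]

lemma exists_lift (I : NonUnitalSubalgebra ℂ A)
    (π : A →L[ℂ] Q) (hπ_surj : Function.Surjective π)
    (hπ_ker : ∀ a : A, π a = 0 ↔ a ∈ I)
    (hπ_norm : ∀ q : Q, ‖q‖ = sInf {r : ℝ | ∃ a : A, π a = q ∧ ‖a‖ = r})
    (T : A →L[ℂ] E) (hT : ∀ x ∈ I, T x = 0) :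
    ∃ S : Q →L[ℂ] E, ∀ a, S (π a) = T a := by
  have key : ∀ a b : A, π a = π b → T a = T b := by
    intro a b hab
    have hmem : a - b ∈ I := (hπ_ker _).1 (by simp [map_sub, hab])
    have h0 : T (a - b) = 0 := hT _ hmem
    rw [map_sub] at h0
    exact sub_eq_zero.mp h0
  choose s hs using hπ_surj
  let Slin : Q →ₗ[ℂ] E :=
    { toFun := fun q => T (s q)
      map_add' := fun p q => by
        have h1 : π (s (p + q)) = π (s p + s q) := by simp [hs]
        show T (s (p + q)) = T (s p) + T (s q)
        rw [key _ _ h1, map_add]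
      map_smul' := fun c q => by
        have h1 : π (s (c • q)) = π (c • s q) := by simp [hs]
        show T (s (c • q)) = c • T (s q)
        rw [key _ _ h1, map_smul] }
  have hbound : ∀ q : Q, ‖Slin q‖ ≤ ‖T‖ * ‖q‖ := by
    intro q
    refine le_of_forall_pos_le_add ?_
    intro ε hε
    have hSne : Set.Nonempty {r : ℝ | ∃ a : A, π a = q ∧ ‖a‖ = r} := ⟨‖s q‖, s q, hs q, rfl⟩
    have hδ : 0 < ε / (‖T‖ + 1) := div_pos hε (by positivity)
    obtain ⟨r, ⟨a, ha, rfl⟩, hr⟩ := Real.lt_sInf_add_pos hSne hδ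
    have heq : Slin q = T a := key _ _ (by rw [hs, ha])
    have hnorm_a : ‖a‖ ≤ ‖q‖ + ε / (‖T‖ + 1) := by
      rw [hπ_norm q]; linarith
    have hTnn : (0:ℝ) ≤ ‖T‖ := norm_nonneg _
    calc ‖Slin q‖ = ‖T a‖ := by rw [heq]
      _ ≤ ‖T‖ * ‖a‖ := T.le_opNorm a
      _ ≤ ‖T‖ * (‖q‖ + ε / (‖T‖ + 1)) := mul_le_mul_of_nonneg_left hnorm_a hTnn
      _ ≤ ‖T‖ * ‖q‖ + ε := by
          rw [mul_add]
          have h1 : ‖T‖ * (ε / (‖T‖ + 1)) ≤ ε := by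
            rw [mul_div_assoc']
            rw [div_le_iff₀ (by positivity)]
            nlinarith
          linarith
  refine ⟨Slin.mkContinuous ‖T‖ hbound, fun a => ?_⟩
  exact key _ _ (hs (π a))

end LiftHelper

variable (A : Type) [NonUnitalNormedRing A] [NormedSpace ℂ A]
  [IsScalarTower ℂ A A] [SMulCommClass ℂ A A] [CompleteSpace A]

set_option maxHeartbeats 1000000 in
/-- If a closed ideal `I` of `A` is weakly amenable and `A/I` is approximately
weakly amenable, then `A` is approximately weakly amenable. -/
theorem approxWeaklyAmenable_of_ideal_weaklyAmenable
    (I : NonUnitalSubalgebra ℂ A) (hclosed : IsClosed (I : Set A))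
    [CompleteSpace ↥I]
    (hl : ∀ (a x : A), x ∈ I → a * x ∈ I) (hr : ∀ (a x : A), x ∈ I → x * a ∈ I)
    {Q : Type} [NonUnitalNormedRing Q] [NormedSpace ℂ Q]
    [IsScalarTower ℂ Q Q] [SMulCommClass ℂ Q Q] [CompleteSpace Q]
    (π : A →L[ℂ] Q)
    (hπ_mul : ∀ a b : A, π (a * b) = π a * π b)
    (hπ_surj : Function.Surjective π)
    (hπ_ker : ∀ a : A, π a = 0 ↔ a ∈ I)
    (hπ_norm : ∀ q : Q, ‖q‖ = sInf {r : ℝ | ∃ a : A, π a = q ∧ ‖a‖ = r})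
    (hI : WeaklyAmenable ↥I) (hQ : ApproxWeaklyAmenable Q) :
    ApproxWeaklyAmenable A := by
  intro D₀ hD₀
  classical
  -- reinterpret `D₀` with explicit dual type
  let D : A →L[ℂ] (A →L[ℂ] ℂ) := D₀
  have hD : ∀ a b : A, D (a * b) = dls a (D b) + drs b (D a) := hD₀
  -- the inclusion of `I` into `A`
  let lIncl : ↥I →ₗ[ℂ] A :=
    { toFun := Subtype.val, map_add' := fun _ _ => rfl, map_smul' := fun _ _ => rfl }
  let incl : ↥I →L[ℂ] A := lIncl.mkContinuous 1 (fun x => by simp [lIncl]; exact le_rfl)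
  have incl_apply : ∀ x : ↥I, incl x = (x : A) := fun _ => rfl
  -- restriction of `D` to a derivation `d : I → I*`
  let restr : (A →L[ℂ] ℂ) →L[ℂ] (↥I →L[ℂ] ℂ) := (ContinuousLinearMap.compL ℂ ↥I A ℂ).flip incl
  let d : ↥I →L[ℂ] (↥I →L[ℂ] ℂ) := restr.comp (D.comp incl)
  have d_apply : ∀ (x u : ↥I), d x u = D (x : A) (u : A) := fun _ _ => rfl
  have coe_mul : ∀ x y : ↥I, ((x * y : ↥I) : A) = (x : A) * (y : A) := fun _ _ => rfl
  have hd : IsDerivation (iterDual ↥I 1) d := by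
    intro x y
    show d (x * y) = dls x (d y) + drs y (d x)
    ext u
    have h1 := DFunLike.congr_fun (hD (x : A) (y : A)) (u : A)
    simp only [ContinuousLinearMap.add_apply, dls_apply, drs_apply, d_apply, coe_mul] at h1 ⊢
    exact h1
  -- weak amenability of `I`: `d` is inner, given by some `f : I*`
  obtain ⟨f₀, hf₀⟩ := hI d hd
  let f : ↥I →L[ℂ] ℂ := f₀
  have hf : ∀ x u : ↥I, D (x : A) (u : A) = f (u * x) - f (x * u) := by
    intro x u
    have h1 : d x = dls x f - drs x f := hf₀ x
    have h2 := DFunLike.congr_fun h1 u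
    simpa only [ContinuousLinearMap.sub_apply, dls_apply, drs_apply, d_apply] using h2
  -- extend `f` to `F : A*` by Hahn-Banach
  obtain ⟨F, hF, -⟩ := exists_extension_norm_eq (I.toSubmodule) (f : ↥I.toSubmodule →L[ℂ] ℂ)
  have hF' : ∀ x : ↥I, F (x : A) = f x := fun x => hF x
  -- the modified derivation `D₁ = D - ad F`
  let D₁ : A →L[ℂ] (A →L[ℂ] ℂ) := D - adF F
  have hD₁der : IsDerivation (iterDual A 1) D₁ := isDerivation_sub hD₀ (adF_isDerivation F)
  have hD₁ : ∀ a b : A, D₁ (a * b) = dls a (D₁ b) + drs b (D₁ a) := hD₁der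
  have D₁_apply : ∀ a u : A, D₁ a u = D a u - (F (u * a) - F (a * u)) := by
    intro a u
    simp [D₁, ContinuousLinearMap.sub_apply]
  -- Step A : `D₁ x` vanishes on `I` for `x ∈ I`
  have stepA : ∀ x u : ↥I, D₁ (x : A) (u : A) = 0 := by
    intro x u
    have h1 := hf x u
    have h2 : F ((u * x : ↥I) : A) = f (u * x) := hF' (u * x)
    have h3 : F ((x * u : ↥I) : A) = f (x * u) := hF' (x * u)
    rw [coe_mul] at h2 h3
    rw [D₁_apply, h1, h2, h3]
    ring
  -- essentiality of `I`
  have hJ := weaklyAmenable_essential hI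
  -- Step C : `D₁` vanishes on `I`
  have stepC : ∀ x : ↥I, D₁ (x : A) = 0 := by
    have hker : (Submodule.span ℂ {z : ↥I | ∃ x y : ↥I, z = x * y}).topologicalClosure ≤
        (D₁.comp incl).ker := by
      refine Submodule.topologicalClosure_minimal _ (Submodule.span_le.2 ?_)
        (ContinuousLinearMap.isClosed_ker _)
      rintro z ⟨x, y, rfl⟩
      have : D₁ ((x * y : ↥I) : A) = 0 := by
        rw [coe_mul, hD₁ (x : A) (y : A)]
        ext c
        have hcx : c * (x : A) ∈ I := hl c _ x.2
        have hyc : (y : A) * c ∈ I := hr c _ y.2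
        have e1 : D₁ (y : A) (c * (x : A)) = 0 := stepA y ⟨c * (x : A), hcx⟩
        have e2 : D₁ (x : A) ((y : A) * c) = 0 := stepA x ⟨(y : A) * c, hyc⟩
        simp [dls_apply, drs_apply, e1, e2]
      simpa [LinearMap.mem_ker, incl_apply] using this
    intro x
    have hx : x ∈ (D₁.comp incl).ker := hker (by rw [hJ]; trivial)
    simpa [LinearMap.mem_ker, incl_apply] using hx
  -- Step D : `D₁ a` vanishes on `I` for every `a`
  have stepD : ∀ (a : A) (x : ↥I), D₁ a (x : A) = 0 := by
    intro a
    have hker : (Submodule.span ℂ {z : ↥I | ∃ x y : ↥I, z = x * y}).topologicalClosure ≤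
        ((D₁ a).comp incl).ker := by
      refine Submodule.topologicalClosure_minimal _ (Submodule.span_le.2 ?_)
        (ContinuousLinearMap.isClosed_ker _)
      rintro z ⟨y, w, rfl⟩
      have hay : a * (y : A) ∈ I := hl a _ y.2
      have h1 : D₁ (a * (y : A)) = 0 := stepC ⟨a * (y : A), hay⟩
      have h2 : D₁ (y : A) = 0 := stepC y
      have h3 := hD₁ a (y : A)
      rw [h1, h2, dls_zero] at h3
      have h4 : drs (y : A) (D₁ a) = 0 := by
        have := h3.symm
        simpa using this
      have h5 := DFunLike.congr_fun h4 (w : A)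
      simp only [drs_apply, ContinuousLinearMap.zero_apply] at h5
      have : D₁ a ((y * w : ↥I) : A) = 0 := by rw [coe_mul]; exact h5
      simpa [LinearMap.mem_ker, incl_apply] using this
    intro x
    have hx : x ∈ ((D₁ a).comp incl).ker := hker (by rw [hJ]; trivial)
    simpa [LinearMap.mem_ker, incl_apply] using hx
  -- lift `D₁` through `π`, in two stages
  have hT1 : ∀ x ∈ I, D₁.flip x = 0 := by
    intro x hx
    ext a
    exact stepD a ⟨x, hx⟩
  obtain ⟨S₁, hS₁⟩ := exists_lift I π hπ_surj hπ_ker hπ_norm D₁.flip hT1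
  have hT2 : ∀ x ∈ I, S₁.flip x = 0 := by
    intro x hx
    ext q
    obtain ⟨b, rfl⟩ := hπ_surj q
    have : S₁ (π b) x = D₁ x b := by rw [hS₁ b]; rfl
    rw [ContinuousLinearMap.flip_apply, this, stepC ⟨x, hx⟩]
    rfl
  obtain ⟨Dbar, hDbar⟩ := exists_lift I π hπ_surj hπ_ker hπ_norm S₁.flip hT2
  have hDbar' : ∀ a b : A, Dbar (π a) (π b) = D₁ a b := by
    intro a b
    rw [hDbar a, ContinuousLinearMap.flip_apply, hS₁ b]
    rfl
  -- `Dbar` is a derivation on `Q`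
  have hDbarDer : IsDerivation (iterDual Q 1) Dbar := by
    intro q p
    obtain ⟨a, rfl⟩ := hπ_surj q
    obtain ⟨b, rfl⟩ := hπ_surj p
    show Dbar (π a * π b) = dls (π a) (Dbar (π b)) + drs (π b) (Dbar (π a))
    ext q'
    obtain ⟨c, rfl⟩ := hπ_surj q'
    have h1 := DFunLike.congr_fun (hD₁ a b) c
    simp only [ContinuousLinearMap.add_apply, dls_apply, drs_apply] at h1 ⊢
    rw [← hπ_mul, ← hπ_mul, ← hπ_mul, hDbar', hDbar', hDbar']
    exact h1
  -- `A/I` is approximately weakly amenable: get the approximating net for `Dbar`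
  obtain ⟨ι, l, g, hlne, hg⟩ := hQ Dbar hDbarDer
  let g' : ι → (Q →L[ℂ] ℂ) := g
  -- transfer the net back to `A`
  let Φ : (Q →L[ℂ] ℂ) →L[ℂ] (A →L[ℂ] ℂ) := (ContinuousLinearMap.compL ℂ A Q ℂ).flip π
  have Φ_apply : ∀ (Λ : Q →L[ℂ] ℂ) (u : A), Φ Λ u = Λ (π u) := fun _ _ => rfl
  refine ⟨ι, l, fun i => Φ (g' i) + F, hlne, ?_⟩
  intro a
  have hfun : ∀ i, dls a (Φ (g' i) + F) - drs a (Φ (g' i) + F) =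
      Φ (dls (π a) (g' i) - drs (π a) (g' i)) + adF F a := by
    intro i
    ext u
    simp only [ContinuousLinearMap.sub_apply, ContinuousLinearMap.add_apply,
      dls_apply, drs_apply, adF_apply, Φ_apply, map_sub, hπ_mul]
    ring
  have hlim : D a = Φ (Dbar (π a)) + adF F a := by
    ext u
    have h1 : Dbar (π a) (π u) = D₁ a u := hDbar' a u
    simp only [ContinuousLinearMap.add_apply, Φ_apply, h1, D₁_apply, adF_apply,
      ContinuousLinearMap.sub_apply]
    ring
  have hg' : Filter.Tendsto (fun i => dls (π a) (g' i) - drs (π a) (g' i)) l (𝓝 (Dbar (π a))) :=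
    hg (π a)
  have hmain : Filter.Tendsto (fun i => dls a (Φ (g' i) + F) - drs a (Φ (g' i) + F)) l
      (𝓝 (D a)) := by
    rw [funext hfun, hlim]
    exact ((Φ.continuous.tendsto _).comp hg').add_const (adF F a)
  exact hmain
end

section
/- A Banach algebra A is approximately amenable if and only if for every Banach A-bimodule X, every continuous derivation D : A → X** is approximately inner. -/
open ContinuousLinearMap Filter Topology

open ContinuousLinearMap Filter Topology

variable {A : Type} [NonUnitalNormedRing A] [NormedSpace ℂ A]

variable (A) [IsScalarTower ℂ A A] [SMulCommClass ℂ A A] [CompleteSpace A]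

variable {A}

variable (A)

variable (A : Type) [NonUnitalNormedRing A] [NormedSpace ℂ A]
  [IsScalarTower ℂ A A] [SMulCommClass ℂ A A] [CompleteSpace A]

/-- `A` is approximately amenable iff for every Banach `A`-bimodule `X`, every
continuous derivation `D : A → X**` is approximately inner. -/
theorem approxAmenable_iff_derivations_into_double_dual
    : ApproxAmenable A ↔
      ∀ (X : BBimod A) (D : A →L[ℂ] X.dual.dual.carrier),
        IsDerivation X.dual.dual D → IsApproxInner X.dual.dual D := by
  constructor
  · intro h X D hD
    exact h X.dual D hD
  · intro h X D hD
    -- canonical embedding of X.dual into its double dual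
    let J' : X.dual.carrier →L[ℂ] X.dual.dual.dual.carrier := ContinuousLinearMap.apply ℂ ℂ
    have hJ'l : ∀ (a : A) (Λ : X.dual.carrier),
        J' (X.dual.lsmul a Λ) = X.dual.dual.dual.lsmul a (J' Λ) := fun a Λ =>
      ContinuousLinearMap.ext fun Φ => rfl
    have hJ'r : ∀ (a : A) (Λ : X.dual.carrier),
        J' (X.dual.rsmul a Λ) = X.dual.dual.dual.rsmul a (J' Λ) := fun a Λ =>
      ContinuousLinearMap.ext fun Φ => rfl
    let D' : A →L[ℂ] X.dual.dual.dual.carrier := J'.comp D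
    have hD' : IsDerivation X.dual.dual.dual D' := by
      intro a b
      show J' (D (a * b)) = _
      rw [hD a b, map_add, hJ'l, hJ'r]; rfl
    obtain ⟨ι, l, F, hne, hF⟩ := h X.dual D' hD'
    -- projection from X.dual.dual.dual back to X.dual
    let J : X.carrier →L[ℂ] X.dual.dual.carrier := ContinuousLinearMap.apply ℂ ℂ
    let P : X.dual.dual.dual.carrier →L[ℂ] X.dual.carrier :=
      (compL ℂ X.carrier X.dual.dual.carrier ℂ).flip J
    have hPl : ∀ (a : A) (G : X.dual.dual.dual.carrier),
        P (X.dual.dual.dual.lsmul a G) = X.dual.lsmul a (P G) := fun a G =>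
      ContinuousLinearMap.ext fun x => rfl
    have hPr : ∀ (a : A) (G : X.dual.dual.dual.carrier),
        P (X.dual.dual.dual.rsmul a G) = X.dual.rsmul a (P G) := fun a G =>
      ContinuousLinearMap.ext fun x => rfl
    have hPD : ∀ a : A, P (D' a) = D a := fun a =>
      ContinuousLinearMap.ext fun x => rfl
    refine ⟨ι, l, fun i => P (F i), hne, fun a => ?_⟩
    have h2 := (P.continuous.tendsto (D' a)).comp (hF a)
    rw [hPD a] at h2
    refine h2.congr fun i => ?_
    show P (X.dual.dual.dual.lsmul a (F i) - X.dual.dual.dual.rsmul a (F i)) = _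
    rw [map_sub, hPl, hPr]
end
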